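/- Under the hypotheses of the previous setting, if additionally the bilinear form b satisfies the inf-sup condition (for every nonzero q ∈ Q there exists v ∈ V with b(v,q) ≠ 0), then the saddle-point problem has a unique solution (u,w) ∈ V × Q: ⟨u,v⟩ - b(v,w) = F(v) for all v ∈ V and b(u,z) = 0 for all z ∈ Q. -/

import Mathlib

open InnerProductSpace

theorem stmt_1
    {V : Type*} [NormedAddCommGroup V] [InnerProductSpace ℝ V] [FiniteDimensional ℝ V]
    {Q : Type*} [AddCommGroup Q] [Module ℝ Q] [FiniteDimensional ℝ Q]
    (b : V →ₗ[ℝ] Q →ₗ[ℝ] ℝ) (F : V →ₗ[ℝ] ℝ)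
    (hinfsup : ∀ q : Q, q ≠ 0 → ∃ v : V, b v q ≠ 0) :
    ∃! uw : V × Q,
      (∀ v : V, ⟪uw.1, v⟫_ℝ - b v uw.2 = F v) ∧ (∀ z : Q, b uw.1 z = 0) := by
  classical
  -- Riesz representative of F
  set f : V := (InnerProductSpace.toDual ℝ V).symm (LinearMap.toContinuousLinearMap F)
    with hfdef
  have hfv : ∀ v : V, ⟪f, v⟫_ℝ = F v := by
    intro v
    simp [hfdef, InnerProductSpace.toDual_symm_apply]
  -- Riesz representatives of b(·, q)
  have key : ∀ (q : Q) (v : V),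
      ⟪((InnerProductSpace.toDual ℝ V).symm
          (LinearMap.toContinuousLinearMap (b.flip q)) : V), v⟫_ℝ = b v q := by
    intro q v
    simp [InnerProductSpace.toDual_symm_apply]
  let T : Q →ₗ[ℝ] V :=
    { toFun := fun q =>
        (InnerProductSpace.toDual ℝ V).symm (LinearMap.toContinuousLinearMap (b.flip q))
      map_add' := by
        intro q r
        apply ext_inner_right ℝ
        intro v
        simp [key, inner_add_left]
      map_smul' := by
        intro c q
        apply ext_inner_right ℝ
        intro v
        simp [key, inner_smul_left] }
  have hT : ∀ (q : Q) (v : V), ⟪T q, v⟫_ℝ = b v q := key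
  have hTinj : ∀ q : Q, T q = 0 → q = 0 := by
    intro q hq
    by_contra hne
    obtain ⟨v, hv⟩ := hinfsup q hne
    apply hv
    rw [← hT q v, hq, inner_zero_left]
  set K : Submodule ℝ V := LinearMap.range T with hK
  set p : K := K.orthogonalProjectionOnto f with hp
  obtain ⟨w₀, hw₀⟩ : ∃ w₀ : Q, T w₀ = (p : V) := p.2
  refine ⟨(f - (p : V), -w₀), ⟨?_, ?_⟩, ?_⟩
  · intro v
    have h1 : b v (-w₀) = ⟪T (-w₀), v⟫_ℝ := (hT _ _).symm
    have h2 : T (-w₀) = -(p : V) := by rw [map_neg, hw₀]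
    rw [h1, h2]
    simp [inner_sub_left, hfv v]
  · intro z
    have hu : f - (p : V) ∈ Kᗮ := Submodule.sub_starProjection_mem_orthogonal (K := K) f
    have hz : T z ∈ K := LinearMap.mem_range_self T z
    rw [← hT z (f - (p : V))]
    exact hu (T z) hz
  · rintro ⟨u', w'⟩ ⟨H1, H2⟩
    have hu : f - (p : V) ∈ Kᗮ := Submodule.sub_starProjection_mem_orthogonal (K := K) f
    have hu' : u' ∈ Kᗮ := by
      intro x hx
      obtain ⟨z, rfl⟩ := hx
      exact (hT z u').trans (H2 z)
    -- difference of solutions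
    have hdiff : ∀ v : V, ⟪u' - (f - (p : V)), v⟫_ℝ = ⟪T (w' - -w₀), v⟫_ℝ := by
      intro v
      have e1 := H1 v
      have e2 : ⟪f - (p : V), v⟫_ℝ - b v (-w₀) = F v := by
        have h1 : b v (-w₀) = ⟪T (-w₀), v⟫_ℝ := (hT _ _).symm
        have h2 : T (-w₀) = -(p : V) := by rw [map_neg, hw₀]
        rw [h1, h2]
        simp [inner_sub_left, hfv v]
      rw [hT]
      rw [inner_sub_left]
      have := sub_eq_sub_iff_sub_eq_sub.mp (e1.trans e2.symm)
      rw [this]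
      simp [map_sub]
    have hd : u' - (f - (p : V)) = T (w' - -w₀) := ext_inner_right ℝ hdiff
    have hdK : u' - (f - (p : V)) ∈ K := hd ▸ LinearMap.mem_range_self T _
    have hdKp : u' - (f - (p : V)) ∈ Kᗮ := Submodule.sub_mem _ hu' hu
    have hd0 : u' - (f - (p : V)) = 0 := by
      have := hdKp _ hdK
      rwa [inner_self_eq_zero] at this
    have hw : w' - -w₀ = 0 := hTinj _ (by rw [← hd, hd0])
    ext
    · exact sub_eq_zero.mp hd0
    · exact sub_eq_zero.mp hw
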